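/- arXiv:2208.09791 — 2 statements merged into one kernel-verified Lean document; each statement's English description precedes it below -/
import Mathlib

section
/- Let d_{mkℓ} ≥ 0 be nonnegative real weights for m,k ∈ {0,…,M−1} and ℓ ∈ {0,…,N−1}, and define P_{mk} := Σ_{ℓ=0}^{N−1} d_{mkℓ} · vec(A_{mkℓ}) vec(A_{mkℓ})^H. Then the largest eigenvalue of the Hermitian matrix Σ_{m,k=0}^{M−1} P_{mk} equals N³ · max_{m,k,ℓ} d_{mkℓ}. -/
open Matrix

/-- The `N × N` unnormalized DFT matrix, `[F]_{m,n} = exp(-2πi·mn/N)`. -/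
noncomputable def dftF (N : ℕ) : Matrix (Fin N) (Fin N) ℂ :=
  Matrix.of fun m n : Fin N =>
    Complex.exp (-(2 * (Real.pi : ℂ) * Complex.I * ((m : ℕ) : ℂ) * ((n : ℕ) : ℂ)) / (N : ℂ))

/-- The `N × MN` selection matrix `S_m = e_mᵀ ⊗ I_N`. -/
def selS (M N : ℕ) (m : Fin M) : Matrix (Fin N) (Fin M × Fin N) ℂ :=
  Matrix.of fun i p => if p.1 = m ∧ p.2 = i then 1 else 0

/-- The matrix `A_{mkℓ} = S_kᴴ diag(N·[F]_ℓ^*) S_m`. -/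
noncomputable def Amat (M N : ℕ) (m k : Fin M) (ℓ : Fin N) :
    Matrix (Fin M × Fin N) (Fin M × Fin N) ℂ :=
  (selS M N k)ᴴ *
    Matrix.diagonal (fun b : Fin N => (N : ℂ) * starRingEnd ℂ (dftF N b ℓ)) * selS M N m

/-- Column-stacking vectorization of a matrix. -/

lemma Amat_apply (M N : ℕ) (m k : Fin M) (ℓ : Fin N) (a b : Fin M × Fin N) :
    Amat M N m k ℓ a b =
      if a.1 = k ∧ b.1 = m ∧ b.2 = a.2 then (N : ℂ) * starRingEnd ℂ (dftF N a.2 ℓ) else 0 := by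
  unfold Amat selS
  rw [Matrix.mul_apply]
  simp only [Matrix.mul_diagonal, Matrix.conjTranspose_apply, Matrix.of_apply, apply_ite (starRingEnd ℂ),
    star_one, star_zero, ite_mul, one_mul, zero_mul, mul_ite, mul_zero, mul_one]
  rw [Finset.sum_eq_single a.2]
  · by_cases h1 : a.1 = k <;> by_cases h2 : b.1 = m <;> by_cases h3 : b.2 = a.2 <;>
      simp [h1, h2, h3]
  · intro c _ hc
    simp only [Ne.symm hc, and_false, false_and, if_false]
    by_cases h1 : a.1 = k <;> by_cases h2 : b.1 = m ∧ b.2 = c <;> simp [h1, h2]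
  · simp

lemma dftF_mul_conj (N : ℕ) (i ℓ ℓ' : Fin N) :
    dftF N i ℓ * starRingEnd ℂ (dftF N i ℓ') =
      Complex.exp (2 * (Real.pi : ℂ) * Complex.I *
        (((ℓ' : ℕ) : ℂ) - ((ℓ : ℕ) : ℂ)) / N) ^ (i : ℕ) := by
  have hN0 : (N : ℂ) ≠ 0 := Nat.cast_ne_zero.2 i.pos.ne'
  rw [← Complex.exp_nat_mul]
  unfold dftF
  rw [Matrix.of_apply, Matrix.of_apply, ← Complex.exp_conj, ← Complex.exp_add]
  congr 1
  have h : (starRingEnd ℂ) (-(2 * (Real.pi : ℂ) * Complex.I * ((i:ℕ):ℂ) * ((ℓ':ℕ):ℂ)) / (N : ℂ))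
      = (2 * (Real.pi : ℂ) * Complex.I * ((i:ℕ):ℂ) * ((ℓ':ℕ):ℂ)) / (N : ℂ) := by
    simp [map_div₀, Complex.conj_I, Complex.conj_ofReal, map_ofNat]
  rw [h]
  field_simp
  ring

lemma dftF_ortho (N : ℕ) (ℓ ℓ' : Fin N) :
    ∑ i : Fin N, dftF N i ℓ * starRingEnd ℂ (dftF N i ℓ') =
      if ℓ = ℓ' then (N : ℂ) else 0 := by
  have hN : 0 < N := ℓ.pos
  have hN0 : (N : ℂ) ≠ 0 := Nat.cast_ne_zero.2 hN.ne'
  set z : ℂ := 2 * (Real.pi : ℂ) * Complex.I * (((ℓ' : ℕ) : ℂ) - ((ℓ : ℕ) : ℂ)) / N with hz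
  have hsum : ∑ i : Fin N, dftF N i ℓ * starRingEnd ℂ (dftF N i ℓ')
      = ∑ i ∈ Finset.range N, Complex.exp z ^ i := by
    rw [← Fin.sum_univ_eq_sum_range]
    exact Finset.sum_congr rfl fun i _ => dftF_mul_conj N i ℓ ℓ'
  rw [hsum]
  by_cases h : ℓ = ℓ'
  · subst h
    simp [hz]
  · rw [if_neg h]
    have hx1 : Complex.exp z ≠ 1 := by
      intro hx
      obtain ⟨n, hn⟩ := Complex.exp_eq_one_iff.mp hx
      rw [hz] at hn
      have h2pi : (2 * (Real.pi : ℂ) * Complex.I) ≠ 0 := by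
        simp [Real.pi_ne_zero, Complex.I_ne_zero, Complex.ofReal_ne_zero]
      have hfrac : (((ℓ' : ℕ) : ℂ) - ((ℓ : ℕ) : ℂ)) = n * N := by
        field_simp at hn
        have h3 : 2 * (Real.pi : ℂ) * Complex.I * (((ℓ' : ℕ) : ℂ) - ((ℓ : ℕ) : ℂ))
            = 2 * (Real.pi : ℂ) * Complex.I * ((n : ℂ) * (N : ℂ)) := by
          linear_combination (2 * (Real.pi : ℂ) * Complex.I) * hn
        exact mul_left_cancel₀ h2pi h3
      have hint : ((ℓ' : ℕ) : ℤ) - ((ℓ : ℕ) : ℤ) = n * N := by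
        exact_mod_cast hfrac
      have hdvd : (N : ℤ) ∣ ((ℓ' : ℕ) : ℤ) - ((ℓ : ℕ) : ℤ) := ⟨n, by linarith [hint]⟩
      have habs : |((ℓ' : ℕ) : ℤ) - ((ℓ : ℕ) : ℤ)| < N := by
        rw [abs_lt]
        have := ℓ.2; have := ℓ'.2
        omega
      have h0 := Int.eq_zero_of_abs_lt_dvd hdvd habs
      have hv : (ℓ' : ℕ) = (ℓ : ℕ) := by omega
      exact h (Fin.ext hv).symm
    have hxN : Complex.exp z ^ N = 1 := by
      rw [← Complex.exp_nat_mul, hz]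
      have : (N : ℂ) * (2 * (Real.pi : ℂ) * Complex.I * (((ℓ' : ℕ) : ℂ) - ((ℓ : ℕ) : ℂ)) / N)
          = (((ℓ' : ℤ) - (ℓ : ℤ) : ℤ) : ℂ) * (2 * (Real.pi : ℂ) * Complex.I) := by
        push_cast
        field_simp
      rw [this, Complex.exp_int_mul_two_pi_mul_I]
    rw [geom_sum_eq hx1, hxN, sub_self, zero_div]

def vecM {a b : Type*} (X : Matrix a b ℂ) : b × a → ℂ := fun p => X p.2 p.1


lemma star_ite_mul_ite' {C D : Prop} [Decidable C] [Decidable D] (a b : ℂ) :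
    star (if C then a else 0) * (if D then b else 0) = if C ∧ D then star a * b else 0 := by
  split_ifs <;> simp_all

lemma star_ite_mul_ite {C : Prop} [Decidable C] (a b : ℂ) :
    star (if C then a else 0) * (if C then b else 0) = if C then star a * b else 0 := by
  split_ifs <;> simp

lemma Wvec_ortho (M N : ℕ) (m k m' k' : Fin M) (ℓ ℓ' : Fin N) :
    star (vecM (Amat M N m k ℓ)) ⬝ᵥ vecM (Amat M N m' k' ℓ') =
      if m = m' ∧ k = k' ∧ ℓ = ℓ' then ((N : ℂ)) ^ 3 else 0 := by
  unfold dotProduct vecM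
  simp only [Pi.star_apply, Fintype.sum_prod_type, Amat_apply]
  by_cases hm : m = m'
  · by_cases hk : k = k'
    · subst hm; subst hk
      simp only [star_ite_mul_ite, ite_and, Finset.sum_ite_eq, Finset.sum_ite_eq',
        Finset.mem_univ, if_true, Finset.sum_ite_irrel, Finset.sum_const_zero]
      have hpt : ∀ x : Fin N,
          star ((N : ℂ) * (starRingEnd ℂ) (dftF N x ℓ)) * ((N : ℂ) * (starRingEnd ℂ) (dftF N x ℓ'))
            = (N : ℂ) ^ 2 * (dftF N x ℓ * (starRingEnd ℂ) (dftF N x ℓ')) := by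
        intro x
        simp only [star_mul', RCLike.star_def, Complex.conj_conj, Complex.conj_natCast]
        ring
      rw [Finset.sum_congr rfl fun x _ => hpt x, ← Finset.mul_sum, dftF_ortho]
      split_ifs with h <;> ring
    · rw [if_neg (by tauto)]
      refine Finset.sum_eq_zero fun x _ => Finset.sum_eq_zero fun x1 _ =>
        Finset.sum_eq_zero fun x2 _ => Finset.sum_eq_zero fun x3 _ => ?_
      rw [star_ite_mul_ite', if_neg]
      rintro ⟨⟨h1, h2, h3⟩, ⟨h4, h5, h6⟩⟩
      exact hk (h1.symm.trans h4)
  · rw [if_neg (by tauto)]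
    refine Finset.sum_eq_zero fun x _ => Finset.sum_eq_zero fun x1 _ =>
      Finset.sum_eq_zero fun x2 _ => Finset.sum_eq_zero fun x3 _ => ?_
    rw [star_ite_mul_ite', if_neg]
    rintro ⟨⟨h1, h2, h3⟩, ⟨h4, h5, h6⟩⟩
    exact hm (h2.symm.trans h5)

lemma sum_mulVec' {κ n : Type*} [Fintype κ] [Fintype n] (f : κ → Matrix n n ℂ) (v : n → ℂ) :
    (∑ i, f i) *ᵥ v = ∑ i, f i *ᵥ v := by
  ext j
  simp only [mulVec, dotProduct, Finset.sum_apply, Matrix.sum_apply, Finset.sum_mul]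
  rw [Finset.sum_comm]

lemma vecMulVec_mulVec' {n : Type*} [Fintype n] (a b v : n → ℂ) :
    vecMulVec a b *ᵥ v = (b ⬝ᵥ v) • a := by
  ext i
  simp only [mulVec, dotProduct, vecMulVec_apply, Pi.smul_apply, smul_eq_mul]
  rw [Finset.sum_mul]
  exact Finset.sum_congr rfl fun j _ => by ring

/-- `P_{mk} = Σ_ℓ d_{mkℓ} · vec(A_{mkℓ}) vec(A_{mkℓ})ᴴ`. -/
noncomputable def Pmat (M N : ℕ) (d : Fin M → Fin M → Fin N → ℝ) (m k : Fin M) :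
    Matrix ((Fin M × Fin N) × (Fin M × Fin N)) ((Fin M × Fin N) × (Fin M × Fin N)) ℂ :=
  ∑ ℓ : Fin N, (d m k ℓ : ℂ) •
    Matrix.vecMulVec (vecM (Amat M N m k ℓ)) (star (vecM (Amat M N m k ℓ)))


lemma Atot_mulVec (M N : ℕ) (d : Fin M → Fin M → Fin N → ℝ)
    (v : (Fin M × Fin N) × (Fin M × Fin N) → ℂ) :
    (∑ m : Fin M, ∑ k : Fin M, Pmat M N d m k) *ᵥ v
      = ∑ m : Fin M, ∑ k : Fin M, ∑ ℓ : Fin N,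
          ((d m k ℓ : ℂ) * (star (vecM (Amat M N m k ℓ)) ⬝ᵥ v)) • vecM (Amat M N m k ℓ) := by
  rw [sum_mulVec']
  refine Finset.sum_congr rfl fun m _ => ?_
  rw [sum_mulVec']
  refine Finset.sum_congr rfl fun k _ => ?_
  unfold Pmat
  rw [sum_mulVec']
  refine Finset.sum_congr rfl fun ℓ _ => ?_
  rw [smul_mulVec, vecMulVec_mulVec', smul_smul]

lemma Atot_mulVec_W (M N : ℕ) (d : Fin M → Fin M → Fin N → ℝ) (m₀ k₀ : Fin M) (ℓ₀ : Fin N) :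
    (∑ m : Fin M, ∑ k : Fin M, Pmat M N d m k) *ᵥ vecM (Amat M N m₀ k₀ ℓ₀)
      = ((d m₀ k₀ ℓ₀ : ℂ) * (N : ℂ) ^ 3) • vecM (Amat M N m₀ k₀ ℓ₀) := by
  rw [Atot_mulVec]
  have h : ∀ m k : Fin M, ∀ ℓ : Fin N,
      ((d m k ℓ : ℂ) * (star (vecM (Amat M N m k ℓ)) ⬝ᵥ vecM (Amat M N m₀ k₀ ℓ₀))) •
          vecM (Amat M N m k ℓ)
        = if m = m₀ then (if k = k₀ then (if ℓ = ℓ₀ then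
            ((d m₀ k₀ ℓ₀ : ℂ) * (N : ℂ) ^ 3) • vecM (Amat M N m₀ k₀ ℓ₀) else 0) else 0) else 0 := by
    intro m k ℓ
    rw [Wvec_ortho]
    by_cases h1 : m = m₀ <;> by_cases h2 : k = k₀ <;> by_cases h3 : ℓ = ℓ₀ <;>
      simp_all
  simp only [h, Finset.sum_ite_eq, Finset.sum_ite_eq', Finset.sum_ite_irrel,
    Finset.sum_const_zero, Finset.mem_univ, if_true]

lemma dot_sum' {κ n : Type*} [Fintype κ] [Fintype n] (u : n → ℂ) (f : κ → n → ℂ) :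
    u ⬝ᵥ (∑ i, f i) = ∑ i, u ⬝ᵥ f i := by
  simp only [dotProduct, Finset.sum_apply, Finset.mul_sum]
  rw [Finset.sum_comm]

lemma dot_conj' {n : Type*} [Fintype n] (v w : n → ℂ) :
    star v ⬝ᵥ w = starRingEnd ℂ (star w ⬝ᵥ v) := by
  simp only [dotProduct, map_sum, _root_.map_mul, Pi.star_apply, RCLike.star_def,
    Complex.conj_conj]
  exact Finset.sum_congr rfl fun i _ => mul_comm _ _

lemma rayleigh (M N : ℕ) (d : Fin M → Fin M → Fin N → ℝ)
    (v : (Fin M × Fin N) × (Fin M × Fin N) → ℂ) :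
    star v ⬝ᵥ ((∑ m : Fin M, ∑ k : Fin M, Pmat M N d m k) *ᵥ v)
      = ∑ m : Fin M, ∑ k : Fin M, ∑ ℓ : Fin N,
          (((d m k ℓ * ‖star (vecM (Amat M N m k ℓ)) ⬝ᵥ v‖ ^ 2 : ℝ)) : ℂ) := by
  rw [Atot_mulVec, dot_sum']
  refine Finset.sum_congr rfl fun m _ => ?_
  rw [dot_sum']
  refine Finset.sum_congr rfl fun k _ => ?_
  rw [dot_sum']
  refine Finset.sum_congr rfl fun ℓ _ => ?_
  rw [dotProduct_smul, dot_conj', smul_eq_mul]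
  set e := star v ⬝ᵥ vecM (Amat M N m k ℓ) with he
  rw [mul_assoc, mul_comm ((starRingEnd ℂ) e) e, Complex.mul_conj, Complex.normSq_eq_norm_sq]
  simp only [RCLike.norm_conj]
  push_cast
  ring

lemma bessel (M N : ℕ) (hN : 0 < N) (v : (Fin M × Fin N) × (Fin M × Fin N) → ℂ)
    (hv : star v ⬝ᵥ v = 1) :
    ∑ m : Fin M, ∑ k : Fin M, ∑ ℓ : Fin N,
      ‖star (vecM (Amat M N m k ℓ)) ⬝ᵥ v‖ ^ 2 ≤ (N : ℝ) ^ 3 := by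
  classical
  set s : ℝ := Real.sqrt ((N : ℝ) ^ 3) with hsdef
  have hN3 : (0 : ℝ) < (N : ℝ) ^ 3 := by positivity
  have hs2 : s ^ 2 = (N : ℝ) ^ 3 := Real.sq_sqrt hN3.le
  have hspos : 0 < s := Real.sqrt_pos.mpr hN3
  set x : EuclideanSpace ℂ ((Fin M × Fin N) × (Fin M × Fin N)) := (WithLp.equiv 2 (((Fin M × Fin N) × (Fin M × Fin N)) → ℂ)).symm v with hx
  set U : Fin M × Fin M × Fin N → EuclideanSpace ℂ ((Fin M × Fin N) × (Fin M × Fin N)) := fun g =>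
    (WithLp.equiv 2 (((Fin M × Fin N) × (Fin M × Fin N)) → ℂ)).symm
      ((((s : ℂ))⁻¹) • vecM (Amat M N g.1 g.2.1 g.2.2)) with hU
  have hinner : ∀ (g : Fin M × Fin M × Fin N) (y : EuclideanSpace ℂ ((Fin M × Fin N) × (Fin M × Fin N))),
      (inner ℂ (U g) y : ℂ)
        = ((s : ℂ))⁻¹ * (star (vecM (Amat M N g.1 g.2.1 g.2.2)) ⬝ᵥ (WithLp.equiv 2 (((Fin M × Fin N) × (Fin M × Fin N)) → ℂ)) y) := by
    intro g y
    rw [EuclideanSpace.inner_eq_star_dotProduct, dotProduct_comm]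
    simp only [hU, Equiv.apply_symm_apply, WithLp.equiv_symm_apply, WithLp.ofLp_toLp, star_smul, smul_dotProduct, smul_eq_mul,
      star_inv₀, map_inv₀, RCLike.star_def, Complex.conj_ofReal]
    rfl
  have hON : Orthonormal ℂ U := by
    rw [orthonormal_iff_ite]
    intro a b
    rw [hinner]
    simp only [hU, Equiv.apply_symm_apply]
    rw [dotProduct_smul, Wvec_ortho]
    rcases eq_or_ne a b with h | h
    · subst h
      rw [if_pos rfl, if_pos ⟨rfl, rfl, rfl⟩]
      have : ((s : ℂ))⁻¹ * (((s : ℂ))⁻¹ * (N : ℂ) ^ 3) = ((s : ℂ) * (s : ℂ))⁻¹ * ((N : ℂ)) ^ 3 := by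
        rw [mul_inv]; ring
      rw [smul_eq_mul, this]
      have hcs : (s : ℂ) * (s : ℂ) = ((N : ℂ)) ^ 3 := by
        have h1 : ((s ^ 2 : ℝ) : ℂ) = (((N : ℝ) ^ 3 : ℝ) : ℂ) := by rw [hs2]
        push_cast at h1
        rw [← h1]; ring
      rw [hcs, inv_mul_cancel₀ (pow_ne_zero _ (Nat.cast_ne_zero.mpr hN.ne'))]
    · rw [if_neg h, if_neg, smul_eq_mul, mul_zero, mul_zero]
      intro hc
      exact h (Prod.ext hc.1 (Prod.ext hc.2.1 hc.2.2))
  have hxnorm : ‖x‖ ^ 2 = 1 := by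
    have h1 : (inner ℂ x x : ℂ) = 1 := by
      rw [EuclideanSpace.inner_eq_star_dotProduct, dotProduct_comm]
      rw [hx]
      simp only [Equiv.apply_symm_apply, WithLp.equiv_symm_apply, WithLp.ofLp_toLp]
      exact hv
    have h2 : (inner ℂ x x : ℂ) = ((‖x‖ : ℂ)) ^ 2 := inner_self_eq_norm_sq_to_K x
    rw [h1] at h2
    exact_mod_cast h2.symm
  have hbes := hON.sum_inner_products_le (s := Finset.univ) x
  rw [hxnorm] at hbes
  have hterm : ∀ g : Fin M × Fin M × Fin N,
      ‖(inner ℂ (U g) x : ℂ)‖ ^ 2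
        = (s ^ 2)⁻¹ * ‖star (vecM (Amat M N g.1 g.2.1 g.2.2)) ⬝ᵥ v‖ ^ 2 := by
    intro g
    rw [hinner]
    simp only [hx, Equiv.apply_symm_apply]
    rw [norm_mul, mul_pow, norm_inv, Complex.norm_real, Real.norm_eq_abs,
      abs_of_pos hspos, inv_pow]
  rw [Finset.sum_congr rfl fun g _ => hterm g, ← Finset.mul_sum] at hbes
  have := (inv_mul_le_iff₀ (by positivity : (0:ℝ) < s ^ 2)).mp hbes
  rw [mul_one, hs2] at this
  calc ∑ m : Fin M, ∑ k : Fin M, ∑ ℓ : Fin N,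
        ‖star (vecM (Amat M N m k ℓ)) ⬝ᵥ v‖ ^ 2
      = ∑ g : Fin M × Fin M × Fin N,
          ‖star (vecM (Amat M N g.1 g.2.1 g.2.2)) ⬝ᵥ v‖ ^ 2 := by
        rw [Fintype.sum_prod_type]
        exact Finset.sum_congr rfl fun m _ => by rw [Fintype.sum_prod_type]
    _ ≤ (N : ℝ) ^ 3 := this

/-- Theorem 1 of the paper: for nonnegative weights `d_{mkℓ}`,
`λmax(Σ_{m,k} P_{mk}) = N³ · max_{m,k,ℓ} d_{mkℓ}`. -/
theorem stmt9 (M N : ℕ) (hM : 0 < M) (hN : 0 < N)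
    (d : Fin M → Fin M → Fin N → ℝ) (hd : ∀ m k ℓ, 0 ≤ d m k ℓ)
    (hS : (∑ m : Fin M, ∑ k : Fin M, Pmat M N d m k).IsHermitian) :
    ⨆ i, hS.eigenvalues i = (N : ℝ) ^ 3 * ⨆ m, ⨆ k, ⨆ ℓ, d m k ℓ := by
  classical
  haveI : NeZero M := ⟨hM.ne'⟩
  haveI : NeZero N := ⟨hN.ne'⟩
  obtain ⟨⟨m₀, k₀, ℓ₀⟩, hmax⟩ := Finite.exists_max (fun g : Fin M × Fin M × Fin N => d g.1 g.2.1 g.2.2)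
  have hmax' : ∀ m k ℓ, d m k ℓ ≤ d m₀ k₀ ℓ₀ := fun m k ℓ => hmax (m, k, ℓ)
  have hD : (⨆ m, ⨆ k, ⨆ ℓ, d m k ℓ) = d m₀ k₀ ℓ₀ := by
    apply le_antisymm
    · exact ciSup_le fun m => ciSup_le fun k => ciSup_le fun ℓ => hmax' m k ℓ
    · calc d m₀ k₀ ℓ₀ ≤ ⨆ ℓ, d m₀ k₀ ℓ := le_ciSup (Finite.bddAbove_range _) ℓ₀
        _ ≤ ⨆ k, ⨆ ℓ, d m₀ k ℓ :=
          le_ciSup (f := fun k => ⨆ ℓ, d m₀ k ℓ) (Finite.bddAbove_range _) k₀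
        _ ≤ ⨆ m, ⨆ k, ⨆ ℓ, d m k ℓ :=
          le_ciSup (f := fun m => ⨆ k, ⨆ ℓ, d m k ℓ) (Finite.bddAbove_range _) m₀
  rw [hD]
  -- unit-norm property of eigenvectors
  have hunit : ∀ i, star ⇑(hS.eigenvectorBasis i) ⬝ᵥ ⇑(hS.eigenvectorBasis i) = 1 := by
    intro i
    have h1 := inner_self_eq_norm_sq_to_K (𝕜 := ℂ) (hS.eigenvectorBasis i)
    rw [EuclideanSpace.inner_eq_star_dotProduct, dotProduct_comm] at h1
    rw [hS.eigenvectorBasis.orthonormal.1 i] at h1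
    simpa using h1
  -- upper bound for each eigenvalue
  have hub : ∀ i, hS.eigenvalues i ≤ (N : ℝ) ^ 3 * d m₀ k₀ ℓ₀ := by
    intro i
    rw [hS.eigenvalues_eq i, rayleigh]
    have hre : RCLike.re (∑ m : Fin M, ∑ k : Fin M, ∑ ℓ : Fin N,
        (((d m k ℓ * ‖star (vecM (Amat M N m k ℓ)) ⬝ᵥ ⇑(hS.eigenvectorBasis i)‖ ^ 2 : ℝ)) : ℂ))
        = ∑ m : Fin M, ∑ k : Fin M, ∑ ℓ : Fin N,
          d m k ℓ * ‖star (vecM (Amat M N m k ℓ)) ⬝ᵥ ⇑(hS.eigenvectorBasis i)‖ ^ 2 := by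
      simp [map_sum, ← Complex.ofReal_pow, Complex.ofReal_re]
    rw [hre]
    have step1 : ∑ m : Fin M, ∑ k : Fin M, ∑ ℓ : Fin N,
        d m k ℓ * ‖star (vecM (Amat M N m k ℓ)) ⬝ᵥ ⇑(hS.eigenvectorBasis i)‖ ^ 2
        ≤ d m₀ k₀ ℓ₀ * ∑ m : Fin M, ∑ k : Fin M, ∑ ℓ : Fin N,
            ‖star (vecM (Amat M N m k ℓ)) ⬝ᵥ ⇑(hS.eigenvectorBasis i)‖ ^ 2 := by
      rw [Finset.mul_sum]
      refine Finset.sum_le_sum fun m _ => ?_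
      rw [Finset.mul_sum]
      refine Finset.sum_le_sum fun k _ => ?_
      rw [Finset.mul_sum]
      refine Finset.sum_le_sum fun ℓ _ => ?_
      exact mul_le_mul_of_nonneg_right (hmax' m k ℓ) (by positivity)
    have step2 := bessel M N hN ⇑(hS.eigenvectorBasis i) (hunit i)
    calc _ ≤ d m₀ k₀ ℓ₀ * ∑ m : Fin M, ∑ k : Fin M, ∑ ℓ : Fin N,
            ‖star (vecM (Amat M N m k ℓ)) ⬝ᵥ ⇑(hS.eigenvectorBasis i)‖ ^ 2 := step1
      _ ≤ d m₀ k₀ ℓ₀ * (N : ℝ) ^ 3 := mul_le_mul_of_nonneg_left step2 (hd m₀ k₀ ℓ₀)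
      _ = (N : ℝ) ^ 3 * d m₀ k₀ ℓ₀ := mul_comm _ _
  -- the value N³ d₀ is an eigenvalue
  have hexists : ∃ j, hS.eigenvalues j = (N : ℝ) ^ 3 * d m₀ k₀ ℓ₀ := by
    by_contra hcon
    push_neg at hcon
    set w₀ := vecM (Amat M N m₀ k₀ ℓ₀) with hw₀
    have hw : (∑ m : Fin M, ∑ k : Fin M, Pmat M N d m k) *ᵥ w₀
        = (((N : ℝ) ^ 3 * d m₀ k₀ ℓ₀ : ℝ) : ℂ) • w₀ := by
      rw [Atot_mulVec_W]
      congr 1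
      push_cast
      ring
    have hw0ne : w₀ ≠ 0 := by
      intro h0
      have h1 : w₀ ((m₀, (0 : Fin N)), (k₀, (0 : Fin N)))
          = (N : ℂ) * starRingEnd ℂ (dftF N 0 ℓ₀) := by
        rw [hw₀]
        show Amat M N m₀ k₀ ℓ₀ (k₀, 0) (m₀, 0) = _
        rw [Amat_apply]
        exact if_pos ⟨rfl, rfl, rfl⟩
      have hF : dftF N 0 ℓ₀ = 1 := by
        unfold dftF
        rw [Matrix.of_apply]
        norm_num
      rw [h0, hF] at h1
      simp only [Pi.zero_apply, _root_.map_one, mul_one] at h1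
      exact hN.ne' (by exact_mod_cast h1.symm)
    have hcoef : ∀ j, star ⇑(hS.eigenvectorBasis j) ⬝ᵥ w₀ = 0 := by
      intro j
      have h1 : star ⇑(hS.eigenvectorBasis j) ⬝ᵥ ((∑ m : Fin M, ∑ k : Fin M, Pmat M N d m k) *ᵥ w₀)
          = (((N : ℝ) ^ 3 * d m₀ k₀ ℓ₀ : ℝ) : ℂ) * (star ⇑(hS.eigenvectorBasis j) ⬝ᵥ w₀) := by
        rw [hw, dotProduct_smul, smul_eq_mul]
      have h2 : star ⇑(hS.eigenvectorBasis j) ⬝ᵥ ((∑ m : Fin M, ∑ k : Fin M, Pmat M N d m k) *ᵥ w₀)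
          = ((hS.eigenvalues j : ℝ) : ℂ) * (star ⇑(hS.eigenvectorBasis j) ⬝ᵥ w₀) := by
        rw [dotProduct_mulVec]
        have h3 : star ⇑(hS.eigenvectorBasis j) ᵥ* (∑ m : Fin M, ∑ k : Fin M, Pmat M N d m k)
            = hS.eigenvalues j • star ⇑(hS.eigenvectorBasis j) := by
          have h4 := Matrix.star_mulVec (M := (∑ m : Fin M, ∑ k : Fin M, Pmat M N d m k))
            (v := ⇑(hS.eigenvectorBasis j))
          rw [hS.eq] at h4
          rw [← h4, hS.mulVec_eigenvectorBasis, star_smul, star_trivial]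
        rw [h3, smul_dotProduct, Complex.real_smul]
      have h5 : (((hS.eigenvalues j : ℝ) : ℂ) - (((N : ℝ) ^ 3 * d m₀ k₀ ℓ₀ : ℝ) : ℂ))
          * (star ⇑(hS.eigenvectorBasis j) ⬝ᵥ w₀) = 0 := by
        rw [sub_mul, ← h1, ← h2, sub_self]
      rcases mul_eq_zero.mp h5 with h6 | h6
      · exfalso
        apply hcon j
        have : ((hS.eigenvalues j : ℝ) : ℂ) = (((N : ℝ) ^ 3 * d m₀ k₀ ℓ₀ : ℝ) : ℂ) :=
          sub_eq_zero.mp h6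
        exact_mod_cast this
      · exact h6
    -- conclude w₀ = 0, contradiction
    apply hw0ne
    have hx0 : (WithLp.equiv 2 (((Fin M × Fin N) × (Fin M × Fin N)) → ℂ)).symm w₀ = 0 := by
      have hrep : (hS.eigenvectorBasis.repr
          ((WithLp.equiv 2 (((Fin M × Fin N) × (Fin M × Fin N)) → ℂ)).symm w₀)) = 0 := by
        ext j
        rw [hS.eigenvectorBasis.repr_apply_apply]
        rw [EuclideanSpace.inner_eq_star_dotProduct, dotProduct_comm]
        simpa using hcoef j
      have := congrArg hS.eigenvectorBasis.repr.symm hrep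
      rwa [LinearIsometryEquiv.symm_apply_apply, map_zero] at this
    have := congrArg (WithLp.equiv 2 (((Fin M × Fin N) × (Fin M × Fin N)) → ℂ)) hx0
    rwa [Equiv.apply_symm_apply] at this
  -- combine
  obtain ⟨j, hj⟩ := hexists
  apply le_antisymm
  · exact ciSup_le hub
  · rw [← hj]
    exact le_ciSup (Finite.bddAbove_range _) j
end

section
/- Let A_1,…,A_J be n×n complex matrices, let x0 ∈ ℂ^n be such that r0_j := x0^H A_j x0 is nonzero for every j, and let b_1,…,b_J be nonpositive real numbers. Define the Hermitian matrix Q2 := Σ_{j=1}^J (b_j / (2|r0_j|)) · ( (r0_j)^* A_j + r0_j A_j^H ). Then for every x ∈ ℂ^n: Σ_{j=1}^J b_j |x^H A_j x| ≤ x^H Q2 x. -/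
open Matrix

lemma aux_conj {n : ℕ} (A : Matrix (Fin n) (Fin n) ℂ) (x : Fin n → ℂ) :
    star x ⬝ᵥ Aᴴ *ᵥ x = starRingEnd ℂ (star x ⬝ᵥ A *ᵥ x) := by
  rw [star_dotProduct, star_mulVec, conjTranspose_conjTranspose, ← dotProduct_mulVec,
    starRingEnd_apply]

lemma aux_sum_mulVec {n J : ℕ} (M : Fin J → Matrix (Fin n) (Fin n) ℂ) (x : Fin n → ℂ) :
    (∑ j : Fin J, M j) *ᵥ x = ∑ j : Fin J, M j *ᵥ x := by
  ext i
  simp [mulVec, dotProduct, Matrix.sum_apply, Finset.sum_mul]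
  rw [Finset.sum_comm]

lemma aux_dot_sum {n J : ℕ} (v : Fin n → ℂ) (w : Fin J → (Fin n → ℂ)) :
    v ⬝ᵥ ∑ j : Fin J, w j = ∑ j : Fin J, v ⬝ᵥ w j := by
  simp [dotProduct, Finset.mul_sum, Finset.sum_apply]
  rw [Finset.sum_comm]

/-- majorization of the linear term, eq. (20) of the paper:
for matrices `A_j`, a point `x0` with `r0_j = x0ᴴ A_j x0 ≠ 0`, and nonpositive `b_j`,
setting `Q2 = Σ_j (b_j / (2|r0_j|)) ((r0_j)^* A_j + r0_j A_jᴴ)`, one has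
`Σ_j b_j |xᴴ A_j x| ≤ xᴴ Q2 x` for every `x`. -/
theorem stmt11 (n J : ℕ) (A : Fin J → Matrix (Fin n) (Fin n) ℂ)
    (x0 : Fin n → ℂ) (hr0 : ∀ j, star x0 ⬝ᵥ A j *ᵥ x0 ≠ 0)
    (b : Fin J → ℝ) (hb : ∀ j, b j ≤ 0)
    (x : Fin n → ℂ) :
    ∑ j : Fin J, b j * ‖star x ⬝ᵥ A j *ᵥ x‖ ≤
      (star x ⬝ᵥ (∑ j : Fin J,
        ((b j / (2 * ‖star x0 ⬝ᵥ A j *ᵥ x0‖) : ℝ) : ℂ) •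
          (starRingEnd ℂ (star x0 ⬝ᵥ A j *ᵥ x0) • A j +
            (star x0 ⬝ᵥ A j *ᵥ x0) • (A j)ᴴ)) *ᵥ x).re := by
  set r : Fin J → ℂ := fun j => star x ⬝ᵥ A j *ᵥ x with hr
  set r0 : Fin J → ℂ := fun j => star x0 ⬝ᵥ A j *ᵥ x0 with hr0def
  have key : (star x ⬝ᵥ (∑ j : Fin J,
        ((b j / (2 * ‖r0 j‖) : ℝ) : ℂ) •
          (starRingEnd ℂ (r0 j) • A j + (r0 j) • (A j)ᴴ)) *ᵥ x)
      = ∑ j : Fin J, ((b j / (2 * ‖r0 j‖) : ℝ) : ℂ) *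
          (starRingEnd ℂ (r0 j) * r j + r0 j * starRingEnd ℂ (r j)) := by
    rw [aux_sum_mulVec, aux_dot_sum]
    refine Finset.sum_congr rfl fun j _ => ?_
    rw [smul_mulVec, dotProduct_smul, smul_eq_mul, add_mulVec, dotProduct_add,
      smul_mulVec, smul_mulVec, dotProduct_smul, dotProduct_smul,
      smul_eq_mul, smul_eq_mul, aux_conj]
  rw [key, Complex.re_sum]
  refine Finset.sum_le_sum fun j _ => ?_
  have h1 : (((b j / (2 * ‖r0 j‖) : ℝ) : ℂ) *
        (starRingEnd ℂ (r0 j) * r j + r0 j * starRingEnd ℂ (r j))).re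
      = (b j / (2 * ‖r0 j‖)) * (2 * (starRingEnd ℂ (r0 j) * r j).re) := by
    have h2 : r0 j * starRingEnd ℂ (r j) = starRingEnd ℂ (starRingEnd ℂ (r0 j) * r j) := by
      rw [_root_.map_mul, Complex.conj_conj]
    rw [h2, Complex.add_conj, ← Complex.ofReal_mul, Complex.ofReal_re]
  rw [h1]
  have habs : ‖r0 j‖ ≠ 0 := by simpa using hr0 j
  have habs' : 0 < ‖r0 j‖ := lt_of_le_of_ne (norm_nonneg _) (Ne.symm habs)
  have hre : (starRingEnd ℂ (r0 j) * r j).re ≤ ‖r0 j‖ * ‖r j‖ :=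
    calc (starRingEnd ℂ (r0 j) * r j).re ≤ ‖starRingEnd ℂ (r0 j) * r j‖ :=
          Complex.re_le_norm _
      _ = ‖r0 j‖ * ‖r j‖ := by
          rw [norm_mul, Complex.norm_conj]
  have hb' : b j / ‖r0 j‖ ≤ 0 :=
    div_nonpos_of_nonpos_of_nonneg (hb j) habs'.le
  calc b j * ‖r j‖
      = b j / ‖r0 j‖ * (‖r0 j‖ * ‖r j‖) := by
        field_simp
    _ ≤ b j / ‖r0 j‖ * (starRingEnd ℂ (r0 j) * r j).re :=
        mul_le_mul_of_nonpos_left hre hb'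
    _ = b j / (2 * ‖r0 j‖) * (2 * (starRingEnd ℂ (r0 j) * r j).re) := by
        field_simp
end
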